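/- Let c₁ > 0, c₂ ∈ ℝ, K > 0. Then ∫₀^∞ e^{−Kξ} N(c₁ξ^{−1/2} + c₂ξ^{1/2}) dξ = (1/K) − (1/(2K))·(1 − c₂/√(c₂² + 2K))·e^{−c₁(√(c₂² + 2K) + c₂)}, where N is the standard normal CDF. -/

import Mathlib

open Real Set MeasureTheory

/-- The standard normal cumulative distribution function. -/
noncomputable def stdNormalCDF (x : ℝ) : ℝ :=
  (Real.sqrt (2 * Real.pi))⁻¹ * ∫ t in Set.Iic x, Real.exp (-t ^ 2 / 2)


lemma gauss_total : ∫ x : ℝ, Real.exp (-x ^ 2 / 2) = Real.sqrt (2 * π) := by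
  have h : ∀ x : ℝ, -x ^ 2 / 2 = -(1/2 : ℝ) * x ^ 2 := fun x => by ring
  simp_rw [h, integral_gaussian]
  rw [show π / (1/2 : ℝ) = 2 * π by ring]

lemma exp_neg_int (b : ℝ) (hb : 0 < b) :
    ∫ x in Ioi (0:ℝ), Real.exp (-(b * x)) = 1 / b := by
  have h1 : (fun x : ℝ => b * x) '' Ioi 0 = Ioi 0 := by
    ext y; simp only [mem_image, mem_Ioi]
    constructor
    · rintro ⟨x, hx, rfl⟩; positivity
    · intro hy; exact ⟨y / b, by positivity, by field_simp⟩
  have h2 := integral_image_eq_integral_abs_deriv_smul (f' := fun _ => b)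
    measurableSet_Ioi
    (fun x _ => by simpa using ((hasDerivAt_id x).const_mul b).hasDerivWithinAt (s := Ioi 0))
    (fun x _ y _ h => by rcases mul_left_cancel₀ hb.ne' h with h; exact h) (fun u => Real.exp (-u))
  rw [h1, integral_exp_neg_Ioi] at h2
  simp only [smul_eq_mul, abs_of_pos hb, neg_zero, Real.exp_zero] at h2
  rw [MeasureTheory.integral_const_mul] at h2
  field_simp
  linarith [h2]


noncomputable def Efun (a l ξ : ℝ) : ℝ := Real.exp (-(a^2/(2*ξ) + l^2*ξ/2))

lemma psi_deriv (a l : ℝ) {ξ : ℝ} (hξ : 0 < ξ) :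
    HasDerivAt (fun x => l * Real.sqrt x - a / Real.sqrt x)
      ((l / Real.sqrt ξ + a / (ξ * Real.sqrt ξ)) / 2) ξ := by
  have hs : (0:ℝ) < Real.sqrt ξ := Real.sqrt_pos.2 hξ
  have hsq : Real.sqrt ξ ^ 2 = ξ := Real.sq_sqrt hξ.le
  have h1 := (Real.hasDerivAt_sqrt hξ.ne').const_mul l
  have h2 := ((Real.hasDerivAt_sqrt hξ.ne').inv hs.ne').const_mul a
  have h3 := h1.sub h2
  have heq : (fun x => l * Real.sqrt x - a * (Real.sqrt x)⁻¹)
      = fun x => l * Real.sqrt x - a / Real.sqrt x := by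
    funext x; rw [div_eq_mul_inv]
  replace h3 : HasDerivAt (fun x => l * Real.sqrt x - a / Real.sqrt x)
      (l * (1 / (2 * Real.sqrt ξ)) - a * (-(1 / (2 * Real.sqrt ξ)) / Real.sqrt ξ ^ 2)) ξ := by
    rw [← heq]; exact h3
  convert h3 using 1
  rw [← hsq]
  field_simp
  rw [Real.sqrt_sq hs.le]
  ring

lemma stepB_ptwise (a l ξ : ℝ) (ha : 0 < a) (hl : 0 < l) (hξ : 0 < ξ) :
    |(l / Real.sqrt ξ + a / (ξ * Real.sqrt ξ)) / 2| •
      Real.exp (-(l * Real.sqrt ξ - a / Real.sqrt ξ)^2/2)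
    = (Real.exp (a*l) / 2) * ((l / Real.sqrt ξ + a / (ξ * Real.sqrt ξ)) * Efun a l ξ) := by
  have hs : (0:ℝ) < Real.sqrt ξ := Real.sqrt_pos.2 hξ
  have hsq : Real.sqrt ξ ^ 2 = ξ := Real.sq_sqrt hξ.le
  rw [abs_of_pos (by positivity), smul_eq_mul]
  have harg : -(l * Real.sqrt ξ - a / Real.sqrt ξ)^2/2 = a*l + -(a^2/(2*ξ) + l^2*ξ/2) := by
    have h4 : ξ = Real.sqrt ξ ^ 2 := hsq.symm
    set s := Real.sqrt ξ with hsdef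
    rw [h4]; field_simp; ring
  rw [harg, Real.exp_add, Efun]; ring

lemma stepB_img (a l : ℝ) (ha : 0 < a) (hl : 0 < l) :
    (fun x => l * Real.sqrt x - a / Real.sqrt x) '' Ioi 0 = univ := by
  ext y
  simp only [mem_image, mem_Ioi, mem_univ, iff_true]
  set D := Real.sqrt (y^2 + 4*a*l) with hD
  have hD2 : D^2 = y^2 + 4*a*l := Real.sq_sqrt (by positivity)
  have hDy : -y < D := by
    nlinarith [Real.sqrt_nonneg (y^2+4*a*l), hD2]
  set u := (y + D)/(2*l) with hu
  have hupos : 0 < u := by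
    rw [hu]; apply div_pos (by linarith) (by positivity)
  have hupos2 : (0:ℝ) < u^2 := by positivity
  refine ⟨u^2, hupos2, ?_⟩
  have hroot : l * u^2 - y * u - a = 0 := by
    rw [hu]; field_simp; nlinarith [hD2]
  rw [Real.sqrt_sq hupos.le]
  field_simp
  nlinarith [hroot]

lemma stepB_inj (a l : ℝ) (ha : 0 < a) (hl : 0 < l) :
    InjOn (fun x => l * Real.sqrt x - a / Real.sqrt x) (Ioi 0) := by
  have hmono : StrictMonoOn (fun x => l * Real.sqrt x - a / Real.sqrt x) (Ioi 0) := by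
    intro x hx y hy hxy
    simp only [mem_Ioi] at hx hy
    have h1 : Real.sqrt x < Real.sqrt y := Real.sqrt_lt_sqrt hx.le hxy
    have hsx : (0:ℝ) < Real.sqrt x := Real.sqrt_pos.2 hx
    have h2 : a / Real.sqrt y < a / Real.sqrt x := div_lt_div_of_pos_left ha hsx h1
    simp only
    nlinarith
  exact hmono.injOn

lemma stepB (a l : ℝ) (ha : 0 < a) (hl : 0 < l) :
    ∫ ξ in Ioi (0:ℝ), (l / Real.sqrt ξ + a / (ξ * Real.sqrt ξ)) * Efun a l ξ
      = 2 * Real.sqrt (2*π) * Real.exp (-(a*l)) := by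
  have h2 := integral_image_eq_integral_abs_deriv_smul
    (f' := fun ξ => (l / Real.sqrt ξ + a / (ξ * Real.sqrt ξ)) / 2)
    measurableSet_Ioi
    (fun x hx => (psi_deriv a l (mem_Ioi.1 hx)).hasDerivWithinAt)
    (stepB_inj a l ha hl) (fun t => Real.exp (-t^2/2))
  rw [stepB_img a l ha hl] at h2
  rw [Measure.restrict_univ] at h2
  have hgt : ∫ x : ℝ, Real.exp (-x ^ 2 / 2) = Real.sqrt (2 * π) := by
    have h : ∀ x : ℝ, -x ^ 2 / 2 = -(1/2 : ℝ) * x ^ 2 := fun x => by ring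
    simp_rw [h, integral_gaussian]
    rw [show π / (1/2 : ℝ) = 2 * π by ring]
  rw [hgt] at h2
  rw [setIntegral_congr_fun measurableSet_Ioi
    (fun ξ hξ => stepB_ptwise a l ξ ha hl (mem_Ioi.1 hξ))] at h2
  rw [MeasureTheory.integral_const_mul] at h2
  have hE : (0:ℝ) < Real.exp (a*l) := Real.exp_pos _
  rw [Real.exp_neg]
  field_simp at h2 ⊢
  linarith


lemma stepA (a l : ℝ) (ha : 0 < a) (hl : 0 < l) :
    ∫ ξ in Ioi (0:ℝ), (l / Real.sqrt ξ - a / (ξ * Real.sqrt ξ)) * Efun a l ξ = 0 := by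
  have himg : (fun x : ℝ => a^2/(l^2*x)) '' Ioi 0 = Ioi 0 := by
    ext y
    simp only [mem_image, mem_Ioi]
    constructor
    · rintro ⟨x, hx, rfl⟩; positivity
    · intro hy; exact ⟨a^2/(l^2*y), by positivity, by field_simp⟩
  have hinj : InjOn (fun x : ℝ => a^2/(l^2*x)) (Ioi 0) := by
    intro x hx y hy h
    simp only [mem_Ioi] at hx hy
    field_simp at h
    exact h.symm
  have hderiv : ∀ x ∈ Ioi (0:ℝ), HasDerivWithinAt (fun x : ℝ => a^2/(l^2*x))
      (-(a^2/(l^2*x^2))) (Ioi 0) x := by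
    intro x hx
    have hx0 : x ≠ 0 := (mem_Ioi.1 hx).ne'
    have h := (hasDerivAt_inv hx0).const_mul (a^2/l^2)
    have heq : (fun x : ℝ => a^2/l^2 * x⁻¹) = fun x : ℝ => a^2/(l^2*x) := by
      funext x; field_simp
    rw [heq] at h
    exact (h.congr_deriv (by ring)).hasDerivWithinAt
  have h2 := integral_image_eq_integral_abs_deriv_smul
    (f' := fun x => -(a^2/(l^2*x^2))) measurableSet_Ioi hderiv hinj
    (fun ξ => (l / Real.sqrt ξ - a / (ξ * Real.sqrt ξ)) * Efun a l ξ)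
  rw [himg] at h2
  have hpt : ∀ ξ ∈ Ioi (0:ℝ),
      |(-(a^2/(l^2*ξ^2)))| • ((fun ξ => (l / Real.sqrt ξ - a / (ξ * Real.sqrt ξ)) * Efun a l ξ)
        (a^2/(l^2*ξ)))
      = -((l / Real.sqrt ξ - a / (ξ * Real.sqrt ξ)) * Efun a l ξ) := by
    intro ξ hξ
    have hξ0 : (0:ℝ) < ξ := mem_Ioi.1 hξ
    have hs : (0:ℝ) < Real.sqrt ξ := Real.sqrt_pos.2 hξ0
    have hsq : Real.sqrt ξ ^ 2 = ξ := Real.sq_sqrt hξ0.le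
    have hsub : Real.sqrt (a^2/(l^2*ξ)) = a/(l*Real.sqrt ξ) := by
      rw [show a^2/(l^2*ξ) = (a/(l*Real.sqrt ξ))^2 by rw [div_pow, mul_pow, hsq],
        Real.sqrt_sq (by positivity)]
    have hE : Efun a l (a^2/(l^2*ξ)) = Efun a l ξ := by
      unfold Efun
      congr 1
      have h4 : ξ = Real.sqrt ξ ^ 2 := hsq.symm
      set s := Real.sqrt ξ with hsdef
      rw [h4]; field_simp; ring
    simp only [smul_eq_mul, abs_neg, abs_of_pos (show (0:ℝ) < a^2/(l^2*ξ^2) by positivity)]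
    rw [hsub, hE]
    have h4 : ξ = Real.sqrt ξ ^ 2 := hsq.symm
    set s := Real.sqrt ξ with hsdef
    rw [h4]
    field_simp
    ring
  rw [setIntegral_congr_fun measurableSet_Ioi hpt, integral_neg] at h2
  linarith

lemma gauss_integrable : Integrable (fun t : ℝ => Real.exp (-t ^ 2 / 2)) := by
  have h : ∀ x : ℝ, -x ^ 2 / 2 = -(1/2 : ℝ) * x ^ 2 := fun x => by ring
  simp_rw [h]
  exact integrable_exp_neg_mul_sq (by norm_num)

lemma stepB_int (a l : ℝ) (ha : 0 < a) (hl : 0 < l) :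
    IntegrableOn (fun ξ => (l / Real.sqrt ξ + a / (ξ * Real.sqrt ξ)) * Efun a l ξ) (Ioi 0) := by
  have hiff := integrableOn_image_iff_integrableOn_abs_deriv_smul
    (f' := fun ξ => (l / Real.sqrt ξ + a / (ξ * Real.sqrt ξ)) / 2)
    measurableSet_Ioi
    (fun x hx => (psi_deriv a l (mem_Ioi.1 hx)).hasDerivWithinAt)
    (stepB_inj a l ha hl) (fun t => Real.exp (-t^2/2))
  rw [stepB_img a l ha hl] at hiff
  have h1 := hiff.1 (gauss_integrable.integrableOn)
  have h2 : IntegrableOn (fun x => 2 * Real.exp (-(a*l)) *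
      (|(l / Real.sqrt x + a / (x * Real.sqrt x)) / 2| •
        Real.exp (-(l * Real.sqrt x - a / Real.sqrt x) ^ 2 / 2))) (Ioi 0) :=
    h1.const_mul (2 * Real.exp (-(a*l)))
  refine IntegrableOn.congr_fun h2 (fun ξ hξ => ?_) measurableSet_Ioi
  rw [stepB_ptwise a l ξ ha hl (mem_Ioi.1 hξ)]
  have : 2 * Real.exp (-(a*l)) * (Real.exp (a*l) / 2 *
      ((l / Real.sqrt ξ + a / (ξ * Real.sqrt ξ)) * Efun a l ξ))
      = (Real.exp (-(a*l)) * Real.exp (a*l)) *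
        ((l / Real.sqrt ξ + a / (ξ * Real.sqrt ξ)) * Efun a l ξ) := by ring
  rw [this, ← Real.exp_add]
  simp

lemma stepA_int (a l : ℝ) (ha : 0 < a) (hl : 0 < l) :
    IntegrableOn (fun ξ => (l / Real.sqrt ξ - a / (ξ * Real.sqrt ξ)) * Efun a l ξ) (Ioi 0) := by
  apply (stepB_int a l ha hl).mono'
  · apply ContinuousOn.aestronglyMeasurable _ measurableSet_Ioi
    apply ContinuousOn.mul
    · apply ContinuousOn.sub
      · exact continuousOn_const.div Real.continuous_sqrt.continuousOn
          (fun x hx => (Real.sqrt_pos.2 (mem_Ioi.1 hx)).ne')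
      · exact continuousOn_const.div (continuousOn_id.mul Real.continuous_sqrt.continuousOn)
          (fun x hx => (mul_pos (mem_Ioi.1 hx) (Real.sqrt_pos.2 (mem_Ioi.1 hx))).ne')
    · apply Real.continuous_exp.comp_continuousOn
      apply ContinuousOn.neg
      apply ContinuousOn.add
      · exact continuousOn_const.div (continuousOn_const.mul continuousOn_id)
          (fun x hx => (by have := mem_Ioi.1 hx; positivity : (0:ℝ) < 2 * x).ne')
      · exact (continuousOn_const.mul continuousOn_id).div_const 2
  · rw [ae_restrict_iff' measurableSet_Ioi]
    apply ae_of_all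
    intro ξ hξ
    have hξ0 := mem_Ioi.1 hξ
    have hs : (0:ℝ) < Real.sqrt ξ := Real.sqrt_pos.2 hξ0
    have hE : (0:ℝ) < Efun a l ξ := Real.exp_pos _
    rw [Real.norm_eq_abs, abs_mul, abs_of_pos hE]
    apply mul_le_mul_of_nonneg_right _ hE.le
    refine (abs_sub _ _).trans_eq ?_
    rw [abs_of_pos (by positivity), abs_of_pos (by positivity)]

lemma AB_ptwise (a l : ℝ) (hl : 0 < l) {ξ : ℝ} (hξ : 0 < ξ) :
    (1/(2*l)) * (((l / Real.sqrt ξ - a / (ξ * Real.sqrt ξ)) * Efun a l ξ)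
      + ((l / Real.sqrt ξ + a / (ξ * Real.sqrt ξ)) * Efun a l ξ))
    = (Real.sqrt ξ)⁻¹ * Efun a l ξ := by
  have hl' : l ≠ 0 := hl.ne'
  have hs : (0:ℝ) < Real.sqrt ξ := Real.sqrt_pos.2 hξ
  field_simp
  ring

lemma inv_gauss (a l : ℝ) (ha : 0 < a) (hl : 0 < l) :
    ∫ ξ in Ioi (0:ℝ), (Real.sqrt ξ)⁻¹ * Efun a l ξ
      = Real.sqrt (2*π) * Real.exp (-(a*l)) / l := by
  rw [← setIntegral_congr_fun measurableSet_Ioi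
    (fun ξ hξ => AB_ptwise a l hl (mem_Ioi.1 hξ))]
  rw [MeasureTheory.integral_const_mul,
    integral_add (stepA_int a l ha hl) (stepB_int a l ha hl),
    stepA a l ha hl, stepB a l ha hl]
  field_simp
  ring

lemma inv_gauss_int (a l : ℝ) (ha : 0 < a) (hl : 0 < l) :
    IntegrableOn (fun ξ => (Real.sqrt ξ)⁻¹ * Efun a l ξ) (Ioi 0) := by
  have h : IntegrableOn (fun ξ => (1/(2*l)) *
      (((l / Real.sqrt ξ - a / (ξ * Real.sqrt ξ)) * Efun a l ξ)
        + ((l / Real.sqrt ξ + a / (ξ * Real.sqrt ξ)) * Efun a l ξ))) (Ioi 0) :=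
    ((stepA_int a l ha hl).add (stepB_int a l ha hl)).const_mul _
  exact IntegrableOn.congr_fun h (fun ξ hξ => AB_ptwise a l hl (mem_Ioi.1 hξ)) measurableSet_Ioi

section Inner
variable (c₁ c₂ : ℝ) {ξ : ℝ}

lemma inner_img (hξ : 0 < ξ) :
    (fun s : ℝ => s / Real.sqrt ξ + (c₁ / Real.sqrt ξ + c₂ * Real.sqrt ξ)) '' Ioi 0
      = Ioi (c₁ / Real.sqrt ξ + c₂ * Real.sqrt ξ) := by
  have hs : (0:ℝ) < Real.sqrt ξ := Real.sqrt_pos.2 hξ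
  ext y
  simp only [mem_image, mem_Ioi]
  constructor
  · rintro ⟨s, hs0, rfl⟩
    have : 0 < s / Real.sqrt ξ := div_pos hs0 hs
    linarith
  · intro hy
    refine ⟨(y - (c₁ / Real.sqrt ξ + c₂ * Real.sqrt ξ)) * Real.sqrt ξ, by nlinarith, ?_⟩
    field_simp
    ring

lemma inner_deriv (hξ : 0 < ξ) : ∀ x ∈ Ioi (0:ℝ),
    HasDerivWithinAt (fun s : ℝ => s / Real.sqrt ξ + (c₁ / Real.sqrt ξ + c₂ * Real.sqrt ξ))
      ((Real.sqrt ξ)⁻¹) (Ioi 0) x := by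
  intro x _
  have h := ((hasDerivAt_id x).div_const (Real.sqrt ξ)).add_const
    (c₁ / Real.sqrt ξ + c₂ * Real.sqrt ξ)
  simpa [one_div] using h.hasDerivWithinAt

lemma inner_inj (hξ : 0 < ξ) :
    InjOn (fun s : ℝ => s / Real.sqrt ξ + (c₁ / Real.sqrt ξ + c₂ * Real.sqrt ξ)) (Ioi 0) := by
  have hs : Real.sqrt ξ ≠ 0 := (Real.sqrt_pos.2 hξ).ne'
  intro x _ y _ h
  simp only [add_left_inj] at h
  field_simp at h
  exact h

lemma inner_ptwise (hξ : 0 < ξ) {s : ℝ} :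
    |(Real.sqrt ξ)⁻¹| • Real.exp (-(s / Real.sqrt ξ + (c₁ / Real.sqrt ξ + c₂ * Real.sqrt ξ))^2/2)
      = (Real.sqrt ξ)⁻¹ * Real.exp (-((c₁+s)^2/(2*ξ) + c₂*(c₁+s) + c₂^2*ξ/2)) := by
  have hs : (0:ℝ) < Real.sqrt ξ := Real.sqrt_pos.2 hξ
  rw [abs_of_pos (by positivity), smul_eq_mul]
  congr 2
  have h4 : ξ = Real.sqrt ξ ^ 2 := (Real.sq_sqrt hξ.le).symm
  set u := Real.sqrt ξ with hu
  rw [h4]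
  field_simp
  ring

lemma inner_sub (hξ : 0 < ξ) :
    ∫ t in Ioi (c₁ / Real.sqrt ξ + c₂ * Real.sqrt ξ), Real.exp (-t^2/2)
      = ∫ s in Ioi (0:ℝ), (Real.sqrt ξ)⁻¹ *
          Real.exp (-((c₁+s)^2/(2*ξ) + c₂*(c₁+s) + c₂^2*ξ/2)) := by
  have h2 := integral_image_eq_integral_abs_deriv_smul
    (f' := fun _ => (Real.sqrt ξ)⁻¹) measurableSet_Ioi (inner_deriv c₁ c₂ hξ)
    (inner_inj c₁ c₂ hξ) (fun t => Real.exp (-t^2/2))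
  rw [inner_img c₁ c₂ hξ] at h2
  rw [h2]
  exact setIntegral_congr_fun measurableSet_Ioi (fun s _ => inner_ptwise c₁ c₂ hξ)

lemma inner_int (hξ : 0 < ξ) :
    IntegrableOn (fun s => (Real.sqrt ξ)⁻¹ *
      Real.exp (-((c₁+s)^2/(2*ξ) + c₂*(c₁+s) + c₂^2*ξ/2))) (Ioi 0) := by
  have hiff := integrableOn_image_iff_integrableOn_abs_deriv_smul
    (f' := fun _ => (Real.sqrt ξ)⁻¹) measurableSet_Ioi (inner_deriv c₁ c₂ hξ)
    (inner_inj c₁ c₂ hξ) (fun t => Real.exp (-t^2/2))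
  rw [inner_img c₁ c₂ hξ] at hiff
  have h1 := hiff.1 gauss_integrable.integrableOn
  exact IntegrableOn.congr_fun h1 (fun s _ => inner_ptwise c₁ c₂ hξ) measurableSet_Ioi

end Inner

lemma cdf_eq (x : ℝ) : stdNormalCDF x
    = 1 - (Real.sqrt (2*π))⁻¹ * ∫ t in Ioi x, Real.exp (-t^2/2) := by
  have hsq2 : (0:ℝ) < Real.sqrt (2*π) := Real.sqrt_pos.2 (by positivity)
  have hsplit := intervalIntegral.integral_Iic_add_Ioi (b := x) (μ := volume)
    gauss_integrable.integrableOn gauss_integrable.integrableOn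
  have hgt : ∫ t : ℝ, Real.exp (-t ^ 2 / 2) = Real.sqrt (2 * π) := by
    have h : ∀ x : ℝ, -x ^ 2 / 2 = -(1/2 : ℝ) * x ^ 2 := fun x => by ring
    simp_rw [h, integral_gaussian]
    rw [show π / (1/2 : ℝ) = 2 * π by ring]
  rw [hgt] at hsplit
  unfold stdNormalCDF
  rw [show (∫ t in Set.Iic x, Real.exp (-t ^ 2 / 2))
      = Real.sqrt (2*π) - ∫ t in Ioi x, Real.exp (-t^2/2) by linarith]
  field_simp

/-- For `c₁ > 0`, `c₂ ∈ ℝ`, `K > 0`: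
`∫₀^∞ e^{−Kξ} N(c₁ξ^{−1/2} + c₂ξ^{1/2}) dξ
  = 1/K − (1/(2K))·(1 − c₂/√(c₂²+2K))·e^{−c₁(√(c₂²+2K)+c₂)}`. -/
theorem integral_exp_stdNormalCDF_two_powers
    (c₁ c₂ K : ℝ) (hc₁ : 0 < c₁) (hK : 0 < K) :
    ∫ ξ in Set.Ioi (0 : ℝ),
        Real.exp (-K * ξ) * stdNormalCDF (c₁ / Real.sqrt ξ + c₂ * Real.sqrt ξ)
      = 1 / K - (1 / (2 * K)) * (1 - c₂ / Real.sqrt (c₂ ^ 2 + 2 * K)) *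
          Real.exp (-c₁ * (Real.sqrt (c₂ ^ 2 + 2 * K) + c₂)) := by
  set l := Real.sqrt (c₂ ^ 2 + 2 * K) with hldef
  have hl : 0 < l := Real.sqrt_pos.2 (by positivity)
  have hl2 : l ^ 2 = c₂ ^ 2 + 2 * K := Real.sq_sqrt (by positivity)
  have hlc : 0 < l + c₂ := by nlinarith
  have hlc' : 0 < l - c₂ := by nlinarith
  set G : ℝ → ℝ → ℝ := fun ξ s => Real.exp (-(K*ξ)) *
    ((Real.sqrt ξ)⁻¹ * Real.exp (-((c₁+s)^2/(2*ξ) + c₂*(c₁+s) + c₂^2*ξ/2))) with hGdef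
  -- measurability on the product
  have hGm : AEStronglyMeasurable (Function.uncurry G)
      ((volume.restrict (Ioi 0)).prod (volume.restrict (Ioi (0:ℝ)))) := by
    rw [Measure.prod_restrict]
    apply ContinuousOn.aestronglyMeasurable _ (measurableSet_Ioi.prod measurableSet_Ioi)
    apply ContinuousOn.mul
    · exact (Real.continuous_exp.comp (continuous_const.mul continuous_fst).neg).continuousOn
    · apply ContinuousOn.mul
      · apply ContinuousOn.inv₀
        · exact (Real.continuous_sqrt.comp continuous_fst).continuousOn
        · intro p hp
          exact (Real.sqrt_pos.2 hp.1).ne'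
      · apply Real.continuous_exp.comp_continuousOn
        apply ContinuousOn.neg
        apply ContinuousOn.add
        apply ContinuousOn.add
        · apply ContinuousOn.div
          · exact (((continuous_const.add continuous_snd).pow 2)).continuousOn
          · exact (continuous_const.mul continuous_fst).continuousOn
          · intro p hp
            have : (0:ℝ) < p.1 := hp.1
            positivity
        · exact (continuous_const.mul (continuous_const.add continuous_snd)).continuousOn
        · exact ((continuous_const.mul continuous_fst).div_const 2).continuousOn
  -- per-ξ section integrability and bound
  have hsec : ∀ ξ ∈ Ioi (0:ℝ), IntegrableOn (fun s => G ξ s) (Ioi 0) := by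
    intro ξ hξ
    exact (inner_int c₁ c₂ (mem_Ioi.1 hξ)).const_mul _
  have hval : ∀ ξ ∈ Ioi (0:ℝ), (∫ s in Ioi (0:ℝ), G ξ s)
      = Real.exp (-(K*ξ)) * ∫ t in Ioi (c₁ / Real.sqrt ξ + c₂ * Real.sqrt ξ),
          Real.exp (-t^2/2) := by
    intro ξ hξ
    rw [hGdef]
    rw [MeasureTheory.integral_const_mul, inner_sub c₁ c₂ (mem_Ioi.1 hξ)]
  have hgaussbd : ∀ x₀ : ℝ, (∫ t in Ioi x₀, Real.exp (-t^2/2)) ≤ Real.sqrt (2*π) := by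
    intro x₀
    rw [← gauss_total]
    apply setIntegral_le_integral gauss_integrable
    exact ae_of_all _ (fun t => (Real.exp_pos _).le)
  have hgaussnn : ∀ x₀ : ℝ, 0 ≤ ∫ t in Ioi x₀, Real.exp (-t^2/2) := by
    intro x₀
    apply integral_nonneg
    exact fun t => (Real.exp_pos _).le
  have hGnn : ∀ ξ s : ℝ, 0 ≤ G ξ s := by
    intro ξ s
    rw [hGdef]
    positivity
  -- product integrability
  have hGint : Integrable (Function.uncurry G)
      ((volume.restrict (Ioi 0)).prod (volume.restrict (Ioi (0:ℝ)))) := by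
    rw [integrable_prod_iff hGm]
    constructor
    · rw [ae_restrict_iff' measurableSet_Ioi]
      exact ae_of_all _ (fun ξ hξ => hsec ξ hξ)
    · apply Integrable.mono' ((exp_neg_integrableOn_Ioi 0 hK).const_mul (Real.sqrt (2*π)))
      · exact hGm.norm.integral_prod_right'
      · rw [ae_restrict_iff' measurableSet_Ioi]
        apply ae_of_all
        intro ξ hξ
        have h1 : ∀ s : ℝ, ‖G ξ s‖ = G ξ s := fun s => Real.norm_of_nonneg (hGnn ξ s)
        simp only [Function.uncurry_apply_pair]
        simp_rw [h1]
        rw [Real.norm_of_nonneg (integral_nonneg (fun s => hGnn ξ s)), hval ξ hξ]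
        calc Real.exp (-(K*ξ)) * ∫ t in Ioi (c₁ / Real.sqrt ξ + c₂ * Real.sqrt ξ),
              Real.exp (-t^2/2)
            ≤ Real.exp (-(K*ξ)) * Real.sqrt (2*π) :=
              mul_le_mul_of_nonneg_left (hgaussbd _) (Real.exp_pos _).le
          _ = Real.sqrt (2*π) * Real.exp (-K*ξ) := by rw [neg_mul]; ring
  have hFint : IntegrableOn (fun ξ => ∫ s in Ioi (0:ℝ), G ξ s) (Ioi 0) :=
    hGint.integral_prod_left
  -- rewrite the integrand using the CDF representation
  have hpt : ∀ ξ ∈ Ioi (0:ℝ),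
      Real.exp (-K * ξ) * stdNormalCDF (c₁ / Real.sqrt ξ + c₂ * Real.sqrt ξ)
        = Real.exp (-(K*ξ)) - (Real.sqrt (2*π))⁻¹ * ∫ s in Ioi (0:ℝ), G ξ s := by
    intro ξ hξ
    rw [cdf_eq, hval ξ hξ, neg_mul]
    ring
  rw [setIntegral_congr_fun measurableSet_Ioi hpt]
  have hexpint : IntegrableOn (fun ξ => Real.exp (-(K*ξ))) (Ioi 0) := by
    have := exp_neg_integrableOn_Ioi 0 hK
    simpa [neg_mul] using this
  rw [integral_sub hexpint (hFint.const_mul _), MeasureTheory.integral_const_mul,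
    integral_integral_swap hGint, exp_neg_int K hK]
  -- evaluate the inner ξ-integral for each s
  have hinner : ∀ s ∈ Ioi (0:ℝ), (∫ ξ in Ioi (0:ℝ), G ξ s)
      = Real.sqrt (2*π)/l * (Real.exp (-((l+c₂)*c₁)) * Real.exp (-((l+c₂)*s))) := by
    intro s hs
    have hcs : 0 < c₁ + s := by have := mem_Ioi.1 hs; linarith
    have h1 : ∀ ξ ∈ Ioi (0:ℝ), G ξ s
        = Real.exp (-(c₂*(c₁+s))) * ((Real.sqrt ξ)⁻¹ * Efun (c₁+s) l ξ) := by
      intro ξ hξ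
      rw [hGdef, Efun]
      have h2 : Real.exp (-(K*ξ)) * Real.exp (-((c₁+s)^2/(2*ξ) + c₂*(c₁+s) + c₂^2*ξ/2))
          = Real.exp (-(c₂*(c₁+s))) * Real.exp (-((c₁+s)^2/(2*ξ) + l^2*ξ/2)) := by
        rw [← Real.exp_add, ← Real.exp_add, hl2]
        ring_nf
      calc Real.exp (-(K*ξ)) *
            ((Real.sqrt ξ)⁻¹ * Real.exp (-((c₁+s)^2/(2*ξ) + c₂*(c₁+s) + c₂^2*ξ/2)))
          = (Real.sqrt ξ)⁻¹ * (Real.exp (-(K*ξ)) *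
              Real.exp (-((c₁+s)^2/(2*ξ) + c₂*(c₁+s) + c₂^2*ξ/2))) := by ring
        _ = (Real.sqrt ξ)⁻¹ * (Real.exp (-(c₂*(c₁+s))) *
              Real.exp (-((c₁+s)^2/(2*ξ) + l^2*ξ/2))) := by rw [h2]
        _ = Real.exp (-(c₂*(c₁+s))) * ((Real.sqrt ξ)⁻¹ *
              Real.exp (-((c₁+s)^2/(2*ξ) + l^2*ξ/2))) := by ring
    rw [setIntegral_congr_fun measurableSet_Ioi h1, MeasureTheory.integral_const_mul]
    have h3 : ∫ ξ in Ioi (0:ℝ), (Real.sqrt ξ)⁻¹ * Efun (c₁+s) l ξ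
        = Real.sqrt (2*π) * Real.exp (-((c₁+s)*l)) / l := inv_gauss (c₁+s) l hcs hl
    rw [h3]
    have h4 : Real.exp (-(c₂*(c₁+s))) * Real.exp (-((c₁+s)*l))
        = Real.exp (-((l+c₂)*c₁)) * Real.exp (-((l+c₂)*s)) := by
      rw [← Real.exp_add, ← Real.exp_add]
      ring_nf
    calc Real.exp (-(c₂*(c₁+s))) * (Real.sqrt (2*π) * Real.exp (-((c₁+s)*l)) / l)
        = Real.sqrt (2*π)/l * (Real.exp (-(c₂*(c₁+s))) * Real.exp (-((c₁+s)*l))) := by ring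
      _ = Real.sqrt (2*π)/l * (Real.exp (-((l+c₂)*c₁)) * Real.exp (-((l+c₂)*s))) := by rw [h4]
  rw [setIntegral_congr_fun measurableSet_Ioi hinner, MeasureTheory.integral_const_mul,
    MeasureTheory.integral_const_mul, exp_neg_int (l+c₂) hlc]
  -- final algebra
  have hs2 : (0:ℝ) < Real.sqrt (2*π) := Real.sqrt_pos.2 (by positivity)
  have h2K : (l - c₂) * (l + c₂) = 2*K := by nlinarith
  rw [show -((l+c₂)*c₁) = -c₁ * (l + c₂) from by ring]
  have key : (Real.sqrt (2*π))⁻¹ * (Real.sqrt (2*π)/l * (Real.exp (-c₁*(l+c₂)) * (1/(l+c₂))))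
      = 1/(2*K) * (1 - c₂/l) * Real.exp (-c₁*(l+c₂)) := by
    rw [show (1:ℝ)/(2*K) * (1 - c₂/l) = 1/(l*(l+c₂)) from by
      rw [← h2K]; field_simp]
    field_simp
  rw [key]
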